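/- Let k ≥ 1, m, n be natural numbers with m ≥ 2k and n ≥ 2k. For Lebesgue-almost every matrix A ∈ ℝ^{m×n} the following holds: there do NOT exist vectors x, z ∈ ℝ^n, each with at most k nonzero entries, such that the support of x and the support of z are distinct but have nonempty intersection, and |Ax| = |Az| entrywise. That is, two sparse vectors with partially (but not fully) overlapping supports can never produce the same phaseless measurements. -/

import Mathlib

open MeasureTheory

open MvPolynomial Matrix

lemma aux_null_fin : ∀ (d : ℕ) (p : MvPolynomial (Fin d) ℝ), p ≠ 0 →
    ∀ᵐ x : Fin d → ℝ, eval x p ≠ 0 := by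
  intro d
  induction d with
  | zero =>
    intro p hp
    refine Filter.Eventually.of_forall fun x => ?_
    obtain ⟨a, rfl⟩ := MvPolynomial.C_surjective (Fin 0) p
    simpa using fun h => hp (by simp [h])
  | succ d ih =>
    intro p hp
    set q := finSuccEquiv ℝ d p with hqdef
    have hq : q ≠ 0 := by
      intro h0
      exact hp ((map_eq_zero_iff _ (finSuccEquiv ℝ d).injective).mp h0)
    obtain ⟨i0, hi0⟩ : ∃ i, q.coeff i ≠ 0 := by
      by_contra h; push_neg at h
      exact hq (Polynomial.ext fun i => by simp [h i])
    have hG := ih _ hi0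
    -- the bad set
    set S : Set (Fin (d + 1) → ℝ) := {x | eval x p = 0} with hS
    have hScont : Continuous fun x : Fin (d+1) → ℝ => eval x p :=
      MvPolynomial.continuous_eval p
    have hSm : MeasurableSet S := (isClosed_eq hScont continuous_const).measurableSet
    rw [ae_iff]
    have hmp := (measurePreserving_piFinSuccAbove (fun _ : Fin (d+1) => (volume : Measure ℝ)) 0)
    set e := MeasurableEquiv.piFinSuccAbove (fun _ : Fin (d+1) => ℝ) 0 with he
    have hkey : volume S = 0 := by
      have hpre : (volume : Measure (ℝ × (Fin d → ℝ))) (e.symm ⁻¹' S) = volume S := by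
        have := (hmp.symm e).measure_preimage (μb := volume) hSm.nullMeasurableSet
        simpa [MeasureTheory.volume_pi, Measure.volume_eq_prod] using this
      rw [← hpre]
      -- swap coordinates
      have hswap : e.symm ⁻¹' S = Prod.swap ⁻¹' {sy : (Fin d → ℝ) × ℝ |
          Polynomial.eval sy.2 (Polynomial.map (eval sy.1) q) = 0} := by
        ext ⟨y, s⟩
        have he1 : e.symm (y, s) = Fin.cons y s := by
          simp [he, MeasurableEquiv.piFinSuccAbove, Fin.insertNthEquiv, Fin.insertNth_zero']
        simp [hS, he1, Prod.swap, eval_eq_eval_mv_eval', hqdef]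
      rw [hswap]
      set T : Set ((Fin d → ℝ) × ℝ) := {sy | Polynomial.eval sy.2 (Polynomial.map (eval sy.1) q) = 0} with hT
      have hTm : MeasurableSet T := by
        have : Continuous fun sy : (Fin d → ℝ) × ℝ => eval (Fin.cons sy.2 sy.1) p := by
          apply (MvPolynomial.continuous_eval p).comp
          apply continuous_pi
          intro i
          refine Fin.cases ?_ (fun j => ?_) i
          · simpa using continuous_snd
          · simp; exact (continuous_apply j).comp continuous_fst
        have hTeq : T = {sy : (Fin d → ℝ) × ℝ | eval (Fin.cons sy.2 sy.1) p = 0} := by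
          ext sy; simp [hT, eval_eq_eval_mv_eval', hqdef]
        rw [hTeq]
        exact (isClosed_eq this continuous_const).measurableSet
      have : (volume : Measure ((Fin d → ℝ) × ℝ)) T = 0 := by
        rw [show (volume : Measure ((Fin d → ℝ) × ℝ)) = (volume : Measure (Fin d → ℝ)).prod volume from rfl]
        rw [Measure.measure_prod_null hTm]
        filter_upwards [hG] with s hs
        have hqs : Polynomial.map (eval s) q ≠ 0 := fun h0 => hs (by
          have := congrArg (fun r => Polynomial.coeff r i0) h0
          simpa [Polynomial.coeff_map] using this)
        have : {y : ℝ | (s, y) ∈ T}.Finite := by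
          simpa [hT] using Polynomial.finite_setOf_isRoot hqs
        exact this.measure_zero _
      calc (volume : Measure (ℝ × (Fin d → ℝ))) (Prod.swap ⁻¹' T)
          = (Measure.map Prod.swap ((volume : Measure ℝ).prod volume)) T :=
            (Measure.map_apply measurable_swap hTm).symm
        _ = ((volume : Measure (Fin d → ℝ)).prod volume) T := by rw [Measure.prod_swap]
        _ = 0 := this
    simpa [hS, ae_iff] using hkey

lemma aux_null {ι : Type*} [Fintype ι] (p : MvPolynomial ι ℝ) (hp : p ≠ 0) :
    ∀ᵐ x : ι → ℝ, eval x p ≠ 0 := by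
  classical
  set d := Fintype.card ι with hd
  set φ : ι ≃ Fin d := Fintype.equivFin ι with hφ
  have hq : rename φ p ≠ 0 := fun h0 => hp (rename_injective φ φ.injective (by simpa using h0))
  have h1 := aux_null_fin d _ hq
  set S : Set (ι → ℝ) := {x | eval x p = 0} with hS
  have hSm : MeasurableSet S :=
    (isClosed_eq (MvPolynomial.continuous_eval p) continuous_const).measurableSet
  have hmp := volume_measurePreserving_piCongrLeft (fun _ : ι => ℝ) φ.symm
  rw [ae_iff]
  have : volume ((MeasurableEquiv.piCongrLeft (fun _ : ι => ℝ) φ.symm) ⁻¹' S) = volume S :=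
    hmp.measure_preimage hSm.nullMeasurableSet
  have hpre : (MeasurableEquiv.piCongrLeft (fun _ : ι => ℝ) φ.symm) ⁻¹' S
      = {x : Fin d → ℝ | eval x (rename φ p) = 0} := by
    ext x
    have hx : ((MeasurableEquiv.piCongrLeft (fun _ : ι => ℝ) φ.symm) x) = x ∘ φ := by
      funext i
      show (Equiv.piCongrLeft (fun _ : ι => ℝ) φ.symm) x i = x (φ i)
      have := Equiv.piCongrLeft_apply_apply (fun _ : ι => ℝ) φ.symm x (φ i)
      simpa using this
    simp [hS, hx, eval_rename]
  rw [hpre] at this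
  have h0 : volume {x : Fin d → ℝ | eval x (rename φ p) = 0} = 0 := by
    rw [ae_iff] at h1
    simpa using h1
  rw [h0] at this
  simpa [hS, ae_iff] using this.symm

def rowEquiv (m n : ℕ) : (Fin n ⊕ Fin m × Fin n) ≃ (Fin (m+1) × Fin n) where
  toFun := Sum.elim (fun j => ((0 : Fin (m+1)), j)) fun q => (q.1.succ, q.2)
  invFun := fun p => Fin.cases (Sum.inl p.2) (fun i => Sum.inr (i, p.2)) p.1
  left_inv := by rintro (j | ⟨i, j⟩) <;> simp
  right_inv := by
    rintro ⟨i, j⟩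
    induction i using Fin.cases <;> simp

lemma mp_curry : ∀ (m n : ℕ), MeasurePreserving
    (fun (B : Fin m × Fin n → ℝ) (i : Fin m) (j : Fin n) => B (i, j))
    (volume : Measure (Fin m × Fin n → ℝ)) (volume : Measure (Fin m → Fin n → ℝ)) := by
  intro m
  induction m with
  | zero =>
    intro n
    constructor
    · exact measurable_of_subsingleton_codomain _
    · rw [MeasureTheory.volume_pi, MeasureTheory.volume_pi,
        Measure.pi_of_empty (fun _ : Fin 0 × Fin n => (volume : Measure ℝ)),
        Measure.pi_of_empty (fun _ : Fin 0 => (volume : Measure (Fin n → ℝ)))]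
      rw [Measure.map_dirac' (measurable_of_subsingleton_codomain _)]
      congr 1
      exact Subsingleton.elim _ _
  | succ m ih =>
    intro n
    have h1 : MeasurePreserving
        (⇑(MeasurableEquiv.piCongrLeft (fun _ : Fin (m+1) × Fin n => ℝ) (rowEquiv m n)).symm)
        volume volume :=
      (volume_measurePreserving_piCongrLeft (fun _ : Fin (m+1) × Fin n => ℝ) (rowEquiv m n)).symm _
    have h2 : MeasurePreserving
        (⇑(MeasurableEquiv.sumPiEquivProdPi (fun _ : Fin n ⊕ Fin m × Fin n => ℝ)))
        volume volume :=
      volume_measurePreserving_sumPiEquivProdPi _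
    have h3 : MeasurePreserving
        (Prod.map (id : (Fin n → ℝ) → (Fin n → ℝ))
          (fun (B : Fin m × Fin n → ℝ) (i : Fin m) (j : Fin n) => B (i, j)))
        volume volume :=
      (MeasurePreserving.id _).prod (ih n)
    have h4 : MeasurePreserving
        (⇑(MeasurableEquiv.piFinSuccAbove (fun _ : Fin (m+1) => (Fin n → ℝ)) 0).symm)
        volume volume :=
      (volume_preserving_piFinSuccAbove (fun _ : Fin (m+1) => (Fin n → ℝ)) 0).symm _
    have hcomp := ((h4.comp h3).comp h2).comp h1
    convert hcomp using 1
    funext B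
    show _ = (MeasurableEquiv.piFinSuccAbove (fun _ : Fin (m+1) => (Fin n → ℝ)) 0).symm _
    funext i j
    have hsymm : ∀ (r : Fin n → ℝ) (C : Fin m → Fin n → ℝ),
        (MeasurableEquiv.piFinSuccAbove (fun _ : Fin (m+1) => (Fin n → ℝ)) 0).symm (r, C)
          = Fin.cons r C := by
      intro r C
      simp [MeasurableEquiv.piFinSuccAbove, MeasurableEquiv.symm, Fin.insertNthEquiv,
        Fin.insertNth_zero']
    rw [hsymm]
    have hpc : ∀ c : Fin n ⊕ Fin m × Fin n,
        (MeasurableEquiv.piCongrLeft (fun _ : Fin (m+1) × Fin n => ℝ) (rowEquiv m n)).symm B c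
          = B (rowEquiv m n c) := by
      intro c
      show (Equiv.piCongrLeft (fun _ : Fin (m+1) × Fin n => ℝ) (rowEquiv m n)).symm B c = _
      simp [Equiv.piCongrLeft_symm_apply]
    induction i using Fin.cases with
    | zero =>
      simp only [MeasurableEquiv.sumPiEquivProdPi, Equiv.sumPiEquivProdPi, Function.comp_apply, Prod.map,
        MeasurableEquiv.coe_mk, Equiv.coe_fn_mk, Fin.cons_zero, id]
      rw [hpc]
      simp [rowEquiv]
    | succ i =>
      simp only [MeasurableEquiv.sumPiEquivProdPi, Equiv.sumPiEquivProdPi, Function.comp_apply, Prod.map,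
        MeasurableEquiv.coe_mk, Equiv.coe_fn_mk, Fin.cons_succ, id]
      rw [hpc]
      simp [rowEquiv]

lemma aux_null_mat (m n : ℕ) (p : MvPolynomial (Fin m × Fin n) ℝ) (hp : p ≠ 0) :
    ∀ᵐ A : Fin m → Fin n → ℝ, eval (fun q => A q.1 q.2) p ≠ 0 := by
  have h1 := aux_null p hp
  rw [ae_iff] at h1 ⊢
  set S : Set (Fin m → Fin n → ℝ) := {A | eval (fun q => A q.1 q.2) p = 0} with hS
  have hSm : MeasurableSet S := by
    have : Continuous fun A : Fin m → Fin n → ℝ => eval (fun q : Fin m × Fin n => A q.1 q.2) p := by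
      apply (MvPolynomial.continuous_eval p).comp
      exact continuous_pi fun q => (continuous_apply q.2).comp (continuous_apply q.1)
    exact (isClosed_eq this continuous_const).measurableSet
  have := (mp_curry m n).measure_preimage hSm.nullMeasurableSet
  have hpre : (fun (B : Fin m × Fin n → ℝ) (i : Fin m) (j : Fin n) => B (i, j)) ⁻¹' S
      = {B : Fin m × Fin n → ℝ | eval B p = 0} := by
    ext B
    have hB : (fun q : Fin m × Fin n => B (q.1, q.2)) = B := funext fun q => by simp
    simp only [hS, Set.mem_preimage, Set.mem_setOf_eq, hB]
  rw [hpre] at this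
  have h0 : volume {B : Fin m × Fin n → ℝ | eval B p = 0} = 0 := by simpa using h1
  rw [h0] at this
  simpa [hS] using this.symm

lemma gram_det_ne_zero_iff {ι κ : Type*} [Fintype ι] [Fintype κ] [DecidableEq κ]
    (B : Matrix ι κ ℝ) : (Bᵀ * B).det ≠ 0 ↔ ∀ w, B *ᵥ w = 0 → w = 0 := by
  rw [Ne, ← Matrix.exists_mulVec_eq_zero_iff]
  constructor
  · intro h w hw
    by_contra hw0
    exact h ⟨w, hw0, by rw [← Matrix.mulVec_mulVec, hw, Matrix.mulVec_zero]⟩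
  · rintro h ⟨v, hv0, hv⟩
    apply hv0
    apply h
    have h1 : v ⬝ᵥ ((Bᵀ * B) *ᵥ v) = (B *ᵥ v) ⬝ᵥ (B *ᵥ v) := by
      rw [← Matrix.mulVec_mulVec, Matrix.dotProduct_mulVec, Matrix.vecMul_transpose]
    rw [hv, dotProduct_zero] at h1
    exact dotProduct_self_eq_zero.mp h1.symm

lemma sum_ind {n : ℕ} (S : Finset (Fin n)) (f : ↥S → ℝ) (j0 : Fin n) :
    ∑ j : ↥S, (if (j : Fin n) = j0 then f j else 0) = if h : j0 ∈ S then f ⟨j0, h⟩ else 0 := by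
  by_cases h : j0 ∈ S
  · rw [dif_pos h]
    rw [Fintype.sum_eq_single (⟨j0, h⟩ : ↥S)]
    · rw [if_pos rfl]
    · intro b hb
      rw [if_neg]
      exact fun hc => hb (Subtype.ext hc)
  · rw [dif_neg h]
    apply Finset.sum_eq_zero
    intro b _
    rw [if_neg]
    exact fun hc => h (hc ▸ b.2)

lemma generic_inj (m n : ℕ) (Sx Sz : Finset (Fin n)) (T : Finset (Fin m)) (εb : Fin m → Bool)
    (hd : Sx.card + Sz.card ≤ T.card)
    (hP : (Sx ∩ Sz).card ≤ (T.filter fun i => εb i = true).card)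
    (hN : (Sx ∩ Sz).card ≤ (T.filter fun i => εb i = false).card) :
    ∀ᵐ A : Fin m → Fin n → ℝ, ∀ x z : Fin n → ℝ,
      (∀ j, j ∉ Sx → x j = 0) → (∀ j, j ∉ Sz → z j = 0) →
      (∀ i ∈ T, ∑ j, A i j * x j = (if εb i then (1:ℝ) else -1) * ∑ j, A i j * z j) →
      x = 0 ∧ z = 0 := by
  classical
  set ε : Fin m → ℝ := fun i => if εb i then 1 else -1 with hεdef
  have hεne : ∀ i, ε i ≠ 0 := by
    intro i
    by_cases h : εb i <;> simp [hεdef, h]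
  set M : Matrix ↥T (↥Sx ⊕ ↥Sz) (MvPolynomial (Fin m × Fin n) ℝ) :=
    fun t c => Sum.elim (fun j : ↥Sx => (X ((t : Fin m), (j : Fin n)) : MvPolynomial _ ℝ))
      (fun j : ↥Sz => C (ε ↑t) * X ((t : Fin m), (j : Fin n))) c with hM
  have hmap : ∀ A : Fin m → Fin n → ℝ,
      (M.map (eval fun q : Fin m × Fin n => A q.1 q.2)) =
      (fun (t : ↥T) (c : ↥Sx ⊕ ↥Sz) =>
        Sum.elim (fun j : ↥Sx => A ↑t ↑j) (fun j : ↥Sz => ε ↑t * A ↑t ↑j) c :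
        Matrix ↥T (↥Sx ⊕ ↥Sz) ℝ) := by
    intro A; funext t c; cases c <;> simp [hM, Matrix.map]
  have hevaldet : ∀ A : Fin m → Fin n → ℝ,
      eval (fun q : Fin m × Fin n => A q.1 q.2) ((Mᵀ * M).det)
      = (((M.map (eval fun q : Fin m × Fin n => A q.1 q.2))ᵀ
          * (M.map (eval fun q : Fin m × Fin n => A q.1 q.2))).det) := by
    intro A
    rw [RingHom.map_det]
    congr 1
    simp only [RingHom.mapMatrix_apply, Matrix.map_mul, Matrix.transpose_map]
  suffices hp : (Mᵀ * M).det ≠ 0 by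
    filter_upwards [aux_null_mat m n _ hp] with A hA x z hx hz hcon
    set B := M.map (eval fun q : Fin m × Fin n => A q.1 q.2) with hB
    have hdet : (Bᵀ * B).det ≠ 0 := by rw [← hevaldet A]; exact hA
    have hinj := (gram_det_ne_zero_iff B).mp hdet
    set w : ↥Sx ⊕ ↥Sz → ℝ := Sum.elim (fun j => x ↑j) (fun j => - z ↑j) with hw
    have hw0 : B *ᵥ w = 0 := by
      funext t
      show ∑ c, B t c * w c = 0
      rw [Fintype.sum_sum_type]
      have e1 : ∑ j : ↥Sx, B t (Sum.inl j) * w (Sum.inl j) = ∑ j : Fin n, A ↑t j * x j := by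
        have : ∀ j : ↥Sx, B t (Sum.inl j) * w (Sum.inl j) = A ↑t ↑j * x ↑j := by
          intro j; rw [hB, hmap A, hw]; rfl
        rw [Fintype.sum_congr _ _ this, Finset.sum_coe_sort Sx (fun j => A ↑t j * x j)]
        exact Finset.sum_subset (Finset.subset_univ Sx)
          (fun j _ hj => by rw [hx j hj, mul_zero])
      have e2 : ∑ j : ↥Sz, B t (Sum.inr j) * w (Sum.inr j)
          = ε ↑t * ∑ j : Fin n, A ↑t j * (- z j) := by
        have hc : ∀ j : ↥Sz, B t (Sum.inr j) * w (Sum.inr j) = ε ↑t * (A ↑t ↑j * (- z ↑j)) := by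
          intro j; rw [hB, hmap A, hw]; show (ε ↑t * A ↑t ↑j) * (- z ↑j) = _; ring
        rw [Fintype.sum_congr _ _ hc, ← Finset.mul_sum,
          Finset.sum_coe_sort Sz (fun j => A ↑t j * (- z j))]
        congr 1
        exact Finset.sum_subset (Finset.subset_univ Sz)
          (fun j _ hj => by rw [hz j hj, neg_zero, mul_zero])
      have e3 : ∑ j : Fin n, A ↑t j * (- z j) = - ∑ j : Fin n, A ↑t j * z j := by
        simp [mul_neg]
      rw [e1, e2, e3, hcon ↑t t.2]
      ring
    have hwz := hinj w hw0
    constructor <;> funext j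
    · by_cases h : j ∈ Sx
      · have := congrFun hwz (Sum.inl ⟨j, h⟩)
        simpa [hw] using this
      · simpa using hx j h
    · by_cases h : j ∈ Sz
      · have := congrFun hwz (Sum.inr ⟨j, h⟩)
        simp [hw] at this
        simpa using this
      · simpa using hz j h
  -- now prove the polynomial is nonzero
  intro h0
  set I : Finset (Fin n) := Sx ∩ Sz with hI
  have hIx : I ⊆ Sx := Finset.inter_subset_left
  have hIz : I ⊆ Sz := Finset.inter_subset_right
  obtain ⟨P', hP'sub, hP'card⟩ := Finset.exists_subset_card_eq hP
  obtain ⟨N', hN'sub, hN'card⟩ := Finset.exists_subset_card_eq hN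
  have hP'T : P' ⊆ T := hP'sub.trans (Finset.filter_subset _ _)
  have hN'T : N' ⊆ T := hN'sub.trans (Finset.filter_subset _ _)
  have hP'ε : ∀ i ∈ P', εb i = true := fun i hi => (Finset.mem_filter.mp (hP'sub hi)).2
  have hN'ε : ∀ i ∈ N', εb i = false := fun i hi => (Finset.mem_filter.mp (hN'sub hi)).2
  have hPN : Disjoint P' N' := Finset.disjoint_left.mpr fun i h1 h2 => by
    have := hP'ε i h1; have := hN'ε i h2; simp_all
  set R : Finset (Fin m) := T \ (P' ∪ N') with hR
  have hRcard : R.card = T.card - 2 * I.card := by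
    rw [hR, Finset.card_sdiff_of_subset (Finset.union_subset hP'T hN'T),
      Finset.card_union_of_disjoint hPN, hP'card, hN'card]
    omega
  have hcx : I.card ≤ Sx.card := Finset.card_le_card hIx
  have hcz : I.card ≤ Sz.card := Finset.card_le_card hIz
  have eP : ↥I ≃ ↥P' := Finset.equivOfCardEq (by rw [hP'card])
  have eN : ↥I ≃ ↥N' := Finset.equivOfCardEq (by rw [hN'card])
  have hcard_rest : Fintype.card (↥(Sx \ I) ⊕ ↥(Sz \ I)) ≤ Fintype.card ↥R := by
    simp only [Fintype.card_sum, Fintype.card_coe, hRcard,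
      Finset.card_sdiff_of_subset hIx, Finset.card_sdiff_of_subset hIz]
    omega
  obtain ⟨eR⟩ : Nonempty ((↥(Sx \ I) ⊕ ↥(Sz \ I)) ↪ ↥R) :=
    Function.Embedding.nonempty_iff_card_le.mpr hcard_rest
  have hRT : R ⊆ T := Finset.sdiff_subset
  have hRT : R ⊆ T := Finset.sdiff_subset
  set ρ : (↥Sx ⊕ ↥Sz) → ↥T := fun c =>
    Sum.elim (fun j : ↥Sx =>
      if h : (j : Fin n) ∈ I then (⟨↑(eP ⟨↑j, h⟩), hP'T (eP ⟨↑j, h⟩).2⟩ : ↥T)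
      else ⟨↑(eR (Sum.inl ⟨↑j, Finset.mem_sdiff.mpr ⟨j.2, h⟩⟩)),
        hRT (eR (Sum.inl ⟨↑j, Finset.mem_sdiff.mpr ⟨j.2, h⟩⟩)).2⟩)
     (fun j : ↥Sz =>
      if h : (j : Fin n) ∈ I then (⟨↑(eN ⟨↑j, h⟩), hN'T (eN ⟨↑j, h⟩).2⟩ : ↥T)
      else ⟨↑(eR (Sum.inr ⟨↑j, Finset.mem_sdiff.mpr ⟨j.2, h⟩⟩)),
        hRT (eR (Sum.inr ⟨↑j, Finset.mem_sdiff.mpr ⟨j.2, h⟩⟩)).2⟩) c with hρ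
  -- zone facts
  have hzPN : ∀ a b : Fin m, a ∈ P' → b ∈ N' → a ≠ b := fun a b ha hb hab =>
    Finset.disjoint_left.mp hPN ha (hab ▸ hb)
  have hzPR : ∀ a b : Fin m, a ∈ P' → b ∈ R → a ≠ b := by
    intro a b ha hb hab
    have hb' : b ∈ T \ (P' ∪ N') := hb
    exact (Finset.mem_sdiff.mp hb').2 (Finset.mem_union_left _ (hab ▸ ha))
  have hzNR : ∀ a b : Fin m, a ∈ N' → b ∈ R → a ≠ b := by
    intro a b ha hb hab
    have hb' : b ∈ T \ (P' ∪ N') := hb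
    exact (Finset.mem_sdiff.mp hb').2 (Finset.mem_union_right _ (hab ▸ ha))
  have hρinj : Function.Injective ρ := by
    intro c c' hcc
    have hv : ((ρ c : ↥T) : Fin m) = ((ρ c' : ↥T) : Fin m) := congrArg _ hcc
    rcases c with j | j <;> rcases c' with j' | j' <;>
      simp only [hρ, Sum.elim_inl, Sum.elim_inr] at hv
    · by_cases h : (↑j : Fin n) ∈ I <;> by_cases h' : (↑j' : Fin n) ∈ I
      · rw [dif_pos h, dif_pos h'] at hv
        have h1 := eP.injective (Subtype.ext hv)
        have h2 := congrArg Subtype.val h1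
        exact congrArg Sum.inl (Subtype.ext h2)
      · rw [dif_pos h, dif_neg h'] at hv
        exact absurd hv (hzPR _ _ (eP _).2 (eR _).2)
      · rw [dif_neg h, dif_pos h'] at hv
        exact absurd hv.symm (hzPR _ _ (eP _).2 (eR _).2)
      · rw [dif_neg h, dif_neg h'] at hv
        have h1 := Sum.inl.inj (eR.injective (Subtype.ext hv))
        have h2 := congrArg Subtype.val h1
        exact congrArg Sum.inl (Subtype.ext h2)
    · by_cases h : (↑j : Fin n) ∈ I <;> by_cases h' : (↑j' : Fin n) ∈ I
      · rw [dif_pos h, dif_pos h'] at hv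
        exact absurd hv (hzPN _ _ (eP _).2 (eN _).2)
      · rw [dif_pos h, dif_neg h'] at hv
        exact absurd hv (hzPR _ _ (eP _).2 (eR _).2)
      · rw [dif_neg h, dif_pos h'] at hv
        exact absurd hv.symm (hzNR _ _ (eN _).2 (eR _).2)
      · rw [dif_neg h, dif_neg h'] at hv
        exact absurd (eR.injective (Subtype.ext hv)) (by simp)
    · by_cases h : (↑j : Fin n) ∈ I <;> by_cases h' : (↑j' : Fin n) ∈ I
      · rw [dif_pos h, dif_pos h'] at hv
        exact absurd hv.symm (hzPN _ _ (eP _).2 (eN _).2)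
      · rw [dif_pos h, dif_neg h'] at hv
        exact absurd hv (hzNR _ _ (eN _).2 (eR _).2)
      · rw [dif_neg h, dif_pos h'] at hv
        exact absurd hv.symm (hzPR _ _ (eP _).2 (eR _).2)
      · rw [dif_neg h, dif_neg h'] at hv
        exact absurd (eR.injective (Subtype.ext hv)) (by simp)
    · by_cases h : (↑j : Fin n) ∈ I <;> by_cases h' : (↑j' : Fin n) ∈ I
      · rw [dif_pos h, dif_pos h'] at hv
        have h1 := eN.injective (Subtype.ext hv)
        have h2 := congrArg Subtype.val h1
        exact congrArg Sum.inr (Subtype.ext h2)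
      · rw [dif_pos h, dif_neg h'] at hv
        exact absurd hv (hzNR _ _ (eN _).2 (eR _).2)
      · rw [dif_neg h, dif_pos h'] at hv
        exact absurd hv.symm (hzNR _ _ (eN _).2 (eR _).2)
      · rw [dif_neg h, dif_neg h'] at hv
        have h1 := Sum.inr.inj (eR.injective (Subtype.ext hv))
        have h2 := congrArg Subtype.val h1
        exact congrArg Sum.inr (Subtype.ext h2)
  -- epsilon values on the chosen rows
  have hεP' : ∀ i : Fin m, i ∈ P' → ε i = 1 := fun i hi => by simp [hεdef, hP'ε i hi]
  have hεN' : ∀ i : Fin m, i ∈ N' → ε i = -1 := fun i hi => by simp [hεdef, hN'ε i hi]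
  set cIdx : (↥Sx ⊕ ↥Sz) → Fin n := Sum.elim (fun j => ↑j) (fun j => ↑j) with hcIdx
  set A₀ : Fin m → Fin n → ℝ := fun i j =>
    if ∃ c : ↥Sx ⊕ ↥Sz, ((ρ c : ↥T) : Fin m) = i ∧ cIdx c = j then 1 else 0 with hA₀
  set B₀ : Matrix ↥T (↥Sx ⊕ ↥Sz) ℝ := M.map (eval fun q : Fin m × Fin n => A₀ q.1 q.2) with hB₀
  have hdet0 : (B₀ᵀ * B₀).det = 0 := by rw [← hevaldet A₀, h0, map_zero]
  have hni : ¬(∀ w, B₀ *ᵥ w = 0 → w = 0) := fun hinj =>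
    (gram_det_ne_zero_iff B₀).mpr hinj hdet0
  push_neg at hni
  obtain ⟨w, hw0, hwne⟩ := hni
  apply hwne
  have hA₀row : ∀ (c₀ : ↥Sx ⊕ ↥Sz) (j' : Fin n),
      A₀ ((ρ c₀ : ↥T) : Fin m) j' = if j' = cIdx c₀ then 1 else 0 := by
    intro c₀ j'
    by_cases h : j' = cIdx c₀
    · rw [if_pos h]
      simp only [hA₀]
      rw [if_pos]
      exact ⟨c₀, rfl, h.symm⟩
    · rw [if_neg h]
      simp only [hA₀]
      rw [if_neg]
      rintro ⟨c, hc1, hc2⟩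
      have hcceq : c = c₀ := hρinj (Subtype.ext hc1)
      subst hcceq
      exact h hc2.symm
  have hrow : ∀ c₀ : ↥Sx ⊕ ↥Sz,
      (if h : cIdx c₀ ∈ Sx then w (Sum.inl ⟨cIdx c₀, h⟩) else 0)
      + ε ((ρ c₀ : ↥T) : Fin m) * (if h : cIdx c₀ ∈ Sz then w (Sum.inr ⟨cIdx c₀, h⟩) else 0)
      = 0 := by
    intro c₀
    have h1 : (B₀ *ᵥ w) (ρ c₀) = 0 := by rw [hw0]; rfl
    rw [show (B₀ *ᵥ w) (ρ c₀) = ∑ c, B₀ (ρ c₀) c * w c from rfl] at h1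
    rw [Fintype.sum_sum_type] at h1
    have e1 : ∑ j : ↥Sx, B₀ (ρ c₀) (Sum.inl j) * w (Sum.inl j)
        = (if h : cIdx c₀ ∈ Sx then w (Sum.inl ⟨cIdx c₀, h⟩) else 0) := by
      have hterm : ∀ j : ↥Sx, B₀ (ρ c₀) (Sum.inl j) * w (Sum.inl j)
          = (if (↑j : Fin n) = cIdx c₀ then w (Sum.inl j) else 0) := by
        intro j
        rw [hB₀, hmap A₀]
        show A₀ ((ρ c₀ : ↥T) : Fin m) ↑j * w (Sum.inl j) = _
        rw [hA₀row]
        split_ifs <;> simp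
      rw [Fintype.sum_congr _ _ hterm, sum_ind Sx (fun j => w (Sum.inl j)) (cIdx c₀)]
    have e2 : ∑ j : ↥Sz, B₀ (ρ c₀) (Sum.inr j) * w (Sum.inr j)
        = ε ((ρ c₀ : ↥T) : Fin m)
          * (if h : cIdx c₀ ∈ Sz then w (Sum.inr ⟨cIdx c₀, h⟩) else 0) := by
      have hterm : ∀ j : ↥Sz, B₀ (ρ c₀) (Sum.inr j) * w (Sum.inr j)
          = ε ((ρ c₀ : ↥T) : Fin m) * (if (↑j : Fin n) = cIdx c₀ then w (Sum.inr j) else 0) := by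
        intro j
        rw [hB₀, hmap A₀]
        show (ε ((ρ c₀ : ↥T) : Fin m) * A₀ ((ρ c₀ : ↥T) : Fin m) ↑j) * w (Sum.inr j) = _
        rw [hA₀row]
        split_ifs <;> ring
      rw [Fintype.sum_congr _ _ hterm, ← Finset.mul_sum,
        sum_ind Sz (fun j => w (Sum.inr j)) (cIdx c₀)]
    rw [e1, e2] at h1
    exact h1
  funext c₀
  show w c₀ = 0
  rcases c₀ with j | j
  · by_cases hIj : (↑j : Fin n) ∈ I
    · have hjz : (↑j : Fin n) ∈ Sz := hIz hIj
      have hq1 := hrow (Sum.inl j)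
      have hq2 := hrow (Sum.inr ⟨↑j, hjz⟩)
      simp only [hcIdx, Sum.elim_inl, Sum.elim_inr] at hq1 hq2
      rw [dif_pos j.2, dif_pos hjz] at hq1 hq2
      have hε1 : ε ((ρ (Sum.inl j) : ↥T) : Fin m) = 1 := by
        simp only [hρ, Sum.elim_inl]
        rw [dif_pos hIj]
        exact hεP' _ (eP _).2
      have hε2 : ε ((ρ (Sum.inr ⟨↑j, hjz⟩) : ↥T) : Fin m) = -1 := by
        simp only [hρ, Sum.elim_inr]
        rw [dif_pos hIj]
        exact hεN' _ (eN _).2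
      rw [hε1] at hq1
      rw [hε2] at hq2
      simp only [Subtype.coe_eta] at hq1 hq2
      linarith
    · have hq1 := hrow (Sum.inl j)
      simp only [hcIdx, Sum.elim_inl] at hq1
      have hnz : (↑j : Fin n) ∉ Sz := fun hzz => hIj (Finset.mem_inter.mpr ⟨j.2, hzz⟩)
      rw [dif_pos j.2, dif_neg hnz] at hq1
      simp only [Subtype.coe_eta, mul_zero, add_zero] at hq1
      exact hq1
  · by_cases hIj : (↑j : Fin n) ∈ I
    · have hjx : (↑j : Fin n) ∈ Sx := hIx hIj
      have hq1 := hrow (Sum.inl ⟨↑j, hjx⟩)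
      have hq2 := hrow (Sum.inr j)
      simp only [hcIdx, Sum.elim_inl, Sum.elim_inr] at hq1 hq2
      rw [dif_pos hjx, dif_pos j.2] at hq1 hq2
      have hε1 : ε ((ρ (Sum.inl ⟨↑j, hjx⟩) : ↥T) : Fin m) = 1 := by
        simp only [hρ, Sum.elim_inl]
        rw [dif_pos hIj]
        exact hεP' _ (eP _).2
      have hε2 : ε ((ρ (Sum.inr j) : ↥T) : Fin m) = -1 := by
        simp only [hρ, Sum.elim_inr]
        rw [dif_pos hIj]
        exact hεN' _ (eN _).2
      rw [hε1] at hq1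
      rw [hε2] at hq2
      simp only [Subtype.coe_eta] at hq1 hq2
      linarith
    · have hq2 := hrow (Sum.inr j)
      simp only [hcIdx, Sum.elim_inr] at hq2
      have hnx : (↑j : Fin n) ∉ Sx := fun hxx => hIj (Finset.mem_inter.mpr ⟨hxx, j.2⟩)
      rw [dif_neg hnx, dif_pos j.2] at hq2
      simp only [Subtype.coe_eta, zero_add] at hq2
      rcases mul_eq_zero.mp hq2 with h | h
      · exact absurd h (hεne _)
      · exact h

/-- For `m ≥ 2k` and `n ≥ 2k`, for Lebesgue-almost every real `m × n` matrix `A`: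
no two `k`-sparse vectors whose supports are distinct but partially overlapping
(nonempty intersection) can produce the same phaseless measurements `|Ax| = |Az|`. -/
theorem partial_support_overlap_impossible_ae (k m n : ℕ) (hk : 1 ≤ k)
    (hm : 2 * k ≤ m) (hn : 2 * k ≤ n) :
    ∀ᵐ A : Fin m → Fin n → ℝ,
      ¬ ∃ x z : Fin n → ℝ,
          (Function.support x).ncard ≤ k ∧
          (Function.support z).ncard ≤ k ∧
          Function.support x ≠ Function.support z ∧
          (Function.support x ∩ Function.support z).Nonempty ∧
          (∀ i, |(Matrix.of A).mulVec x i| = |(Matrix.of A).mulVec z i|) := by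
  classical
  have hall : ∀ᵐ A : Fin m → Fin n → ℝ,
      ∀ p : Finset (Fin n) × Finset (Fin n) × Finset (Fin m) × (Fin m → Bool),
        (p.1.card + p.2.1.card ≤ p.2.2.1.card ∧
         (p.1 ∩ p.2.1).card ≤ (p.2.2.1.filter fun i => p.2.2.2 i = true).card ∧
         (p.1 ∩ p.2.1).card ≤ (p.2.2.1.filter fun i => p.2.2.2 i = false).card) →
        ∀ x z : Fin n → ℝ, (∀ j, j ∉ p.1 → x j = 0) → (∀ j, j ∉ p.2.1 → z j = 0) →
        (∀ i ∈ p.2.2.1,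
          ∑ j, A i j * x j = (if p.2.2.2 i then (1:ℝ) else -1) * ∑ j, A i j * z j) →
        x = 0 ∧ z = 0 := by
    rw [MeasureTheory.ae_all_iff]
    intro p
    by_cases hcond : p.1.card + p.2.1.card ≤ p.2.2.1.card ∧
         (p.1 ∩ p.2.1).card ≤ (p.2.2.1.filter fun i => p.2.2.2 i = true).card ∧
         (p.1 ∩ p.2.1).card ≤ (p.2.2.1.filter fun i => p.2.2.2 i = false).card
    · filter_upwards [generic_inj m n p.1 p.2.1 p.2.2.1 p.2.2.2
        hcond.1 hcond.2.1 hcond.2.2] with A hA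
      exact fun _ => hA
    · exact Filter.Eventually.of_forall fun A hc => absurd hc hcond
  filter_upwards [hall] with A hA
  rintro ⟨x, z, hxk, hzk, hne, hmeet, habs⟩
  have hxf : (Function.support x).Finite := Set.toFinite _
  have hzf : (Function.support z).Finite := Set.toFinite _
  set Sx : Finset (Fin n) := hxf.toFinset with hSx
  set Sz : Finset (Fin n) := hzf.toFinset with hSz
  have hmemx : ∀ j, j ∈ Sx ↔ x j ≠ 0 := fun j => by
    rw [hSx, Set.Finite.mem_toFinset, Function.mem_support]
  have hmemz : ∀ j, j ∈ Sz ↔ z j ≠ 0 := fun j => by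
    rw [hSz, Set.Finite.mem_toFinset, Function.mem_support]
  have hx0 : ∀ j, j ∉ Sx → x j = 0 := fun j hj => by
    by_contra h; exact hj ((hmemx j).mpr h)
  have hz0 : ∀ j, j ∉ Sz → z j = 0 := fun j hj => by
    by_contra h; exact hj ((hmemz j).mpr h)
  have hcardx : Sx.card ≤ k := by
    rw [hSx, ← Set.ncard_eq_toFinset_card _ hxf]; exact hxk
  have hcardz : Sz.card ≤ k := by
    rw [hSz, ← Set.ncard_eq_toFinset_card _ hzf]; exact hzk
  set εb : Fin m → Bool :=
    fun i => decide ((Matrix.of A).mulVec x i = (Matrix.of A).mulVec z i) with hεb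
  have hmv : ∀ (v : Fin n → ℝ) (i : Fin m), (Matrix.of A).mulVec v i = ∑ j, A i j * v j :=
    fun v i => rfl
  have hsign : ∀ i, ∑ j, A i j * x j = (if εb i then (1:ℝ) else -1) * ∑ j, A i j * z j := by
    intro i
    by_cases he : (Matrix.of A).mulVec x i = (Matrix.of A).mulVec z i
    · have : εb i = true := by rw [hεb]; exact decide_eq_true he
      rw [this, if_pos rfl, one_mul, ← hmv x i, ← hmv z i]
      exact he
    · have hb : εb i = false := by rw [hεb]; exact decide_eq_false he
      have h2 : (Matrix.of A).mulVec x i = - (Matrix.of A).mulVec z i := by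
        rcases abs_eq_abs.mp (habs i) with h | h
        · exact absurd h he
        · exact h
      rw [hb]
      simp only [Bool.false_eq_true, if_false, neg_one_mul]
      rw [← hmv x i, ← hmv z i]
      exact h2
  set Pb : Finset (Fin m) := Finset.univ.filter fun i => εb i = true with hPb
  set Nb : Finset (Fin m) := Finset.univ.filter fun i => εb i = false with hNb
  have hPbNb : Pb.card + Nb.card = m := by
    have hfun : Nb = Finset.univ.filter fun i => ¬ (εb i = true) := by
      rw [hNb]
      apply Finset.filter_congr
      intro i _
      simp
    rw [hPb, hfun, Finset.card_filter_add_card_filter_not, Finset.card_fin]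
  have hxmem_of_supp : ∀ j ∈ Function.support x ∩ Function.support z, j ∈ Sx ∩ Sz := by
    intro j hj
    exact Finset.mem_inter.mpr ⟨(hmemx j).mpr hj.1, (hmemz j).mpr hj.2⟩
  set c : ℕ := (Sx ∩ Sz).card with hc
  have hsupcard : Sx.card + Sz.card ≤ 2 * k := by omega
  have hcx : c ≤ Sx.card := Finset.card_le_card Finset.inter_subset_left
  have hunion : (Sx ∪ Sz).card + c = Sx.card + Sz.card := Finset.card_union_add_card_inter _ _
  by_cases h1 : c ≤ Pb.card
  · by_cases h2 : c ≤ Nb.card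
    · -- main case
      have hcond : Sx.card + Sz.card ≤ (Finset.univ : Finset (Fin m)).card ∧
          (Sx ∩ Sz).card ≤ ((Finset.univ : Finset (Fin m)).filter fun i => εb i = true).card ∧
          (Sx ∩ Sz).card ≤ ((Finset.univ : Finset (Fin m)).filter fun i => εb i = false).card := by
        refine ⟨?_, h1, h2⟩
        rw [Finset.card_fin]
        omega
      obtain ⟨hxz, -⟩ := hA (Sx, Sz, Finset.univ, εb) hcond x z hx0 hz0
        (fun i _ => hsign i)
      obtain ⟨j, hj⟩ := hmeet
      exact hj.1 (congrFun hxz j)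
    · -- few negative rows: use u = x - z on T = Pb
      push_neg at h2
      have hcond : (Sx ∪ Sz).card + (∅ : Finset (Fin n)).card ≤ Pb.card ∧
          ((Sx ∪ Sz) ∩ ∅).card ≤ (Pb.filter fun i => εb i = true).card ∧
          ((Sx ∪ Sz) ∩ ∅).card ≤ (Pb.filter fun i => εb i = false).card := by
        refine ⟨?_, by simp, by simp⟩
        simp only [Finset.card_empty, add_zero]
        omega
      have hconstr : ∀ i ∈ Pb, ∑ j, A i j * (x - z) j
          = (if εb i then (1:ℝ) else -1) * ∑ j, A i j * (0 : Fin n → ℝ) j := by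
        intro i hi
        have hit : εb i = true := (Finset.mem_filter.mp hi).2
        have hs := hsign i
        rw [hit, if_pos rfl, one_mul] at hs
        have : ∑ j, A i j * (x - z) j = ∑ j, A i j * x j - ∑ j, A i j * z j := by
          rw [← Finset.sum_sub_distrib]
          congr 1; funext j; simp [mul_sub]
        rw [this, hs]
        simp
      obtain ⟨hxz, -⟩ := hA (Sx ∪ Sz, ∅, Pb, εb) hcond (x - z) 0
        (fun j hj => by
          rw [Finset.mem_union, not_or] at hj
          simp [hx0 j hj.1, hz0 j hj.2])
        (fun j _ => rfl) hconstr
      have : x = z := sub_eq_zero.mp hxz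
      exact hne (by rw [this])
  · -- few positive rows: use v = x + z on T = Nb
    push_neg at h1
    have hcond : (Sx ∪ Sz).card + (∅ : Finset (Fin n)).card ≤ Nb.card ∧
        ((Sx ∪ Sz) ∩ ∅).card ≤ (Nb.filter fun i => εb i = true).card ∧
        ((Sx ∪ Sz) ∩ ∅).card ≤ (Nb.filter fun i => εb i = false).card := by
      refine ⟨?_, by simp, by simp⟩
      simp only [Finset.card_empty, add_zero]
      omega
    have hconstr : ∀ i ∈ Nb, ∑ j, A i j * (x + z) j
        = (if εb i then (1:ℝ) else -1) * ∑ j, A i j * (0 : Fin n → ℝ) j := by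
      intro i hi
      have hif : εb i = false := (Finset.mem_filter.mp hi).2
      have hs := hsign i
      rw [hif] at hs
      simp only [Bool.false_eq_true, if_false, neg_one_mul] at hs
      have : ∑ j, A i j * (x + z) j = ∑ j, A i j * x j + ∑ j, A i j * z j := by
        rw [← Finset.sum_add_distrib]
        congr 1; funext j; simp [mul_add]
      rw [this, hs]
      simp
    obtain ⟨hxz, -⟩ := hA (Sx ∪ Sz, ∅, Nb, εb) hcond (x + z) 0
      (fun j hj => by
        rw [Finset.mem_union, not_or] at hj
        simp [hx0 j hj.1, hz0 j hj.2])
      (fun j _ => rfl) hconstr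
    have hxez : x = -z := by
      funext j
      have := congrFun hxz j
      simp only [Pi.add_apply, Pi.zero_apply] at this
      simp [Pi.neg_apply]
      linarith
    apply hne
    rw [hxez]
    exact Function.support_neg z
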